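/- Let A be a real d×d matrix with A v = λ v for a unit vector v and λ > 0; let L be an A-invariant subspace with ℝ^d = span{v} ⊕ L such that there are constants C₂ > 0 and Δ > 0 with ‖e^{tA} u‖ ≤ C₂ e^{(λ−Δ)t} ‖u‖ for all u ∈ L and t ≥ 0; let Π_v and Π_L be the projections onto span{v} and L along each other. Let A(·) : [0,∞) → ℝ^{d×d} be continuous with ‖A(s) − A‖ ≤ C₃ e^{−μs} for some C₃ ≥ 0 and μ > 0, let Y : [0,∞) → ℝ^d be continuous with ‖Y(s)‖ ≤ K e^{(λ+α)s} for some K ≥ 0 and some α with 0 < α < μ, and define D(t) = ∫_0^t e^{A(t−s)} (A(s) − A) Y(s) ds. Then the integral I = ∫_0^∞ e^{−λs} Π_v (A(s) − A) Y(s) ds converges absolutely, and there exist ρ > 0 and a constant C' such that ‖e^{−λt} D(t) − I‖ ≤ C' e^{−ρt} for all t ≥ 0. -/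

import Mathlib

open Filter Set MeasureTheory intervalIntegral Nat
open scoped Topology

noncomputable section

lemma exp_apply_eigen {E : Type*} [NormedAddCommGroup E] [NormedSpace ℝ E] [CompleteSpace E]
    (A : E →L[ℝ] E) (v : E) (lam : ℝ) (hAv : A v = lam • v) (τ : ℝ) :
    NormedSpace.exp (τ • A) v = Real.exp (τ * lam) • v := by
  have hpow : ∀ n : ℕ, ((τ • A) ^ n) v = (τ * lam) ^ n • v := by
    intro n
    induction n with
    | zero => simp
    | succ n ih =>
      rw [pow_succ, ContinuousLinearMap.mul_apply]
      have h1 : (τ • A) v = (τ * lam) • v := by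
        simp [hAv, smul_smul]
      rw [h1, _root_.map_smul, ih, smul_smul, pow_succ, mul_comm]
  have hsum : Summable fun n : ℕ => ((n ! : ℝ)⁻¹) • (τ • A) ^ n :=
    NormedSpace.expSeries_summable' (τ • A)
  have hsum2 : Summable fun n : ℕ => ((n ! : ℝ)⁻¹) * (τ * lam) ^ n := by
    simpa [div_eq_inv_mul] using Real.summable_pow_div_factorial (τ * lam)
  calc NormedSpace.exp (τ • A) v
      = (∑' n : ℕ, ((n ! : ℝ)⁻¹) • (τ • A) ^ n) v := by
        rw [NormedSpace.exp_eq_tsum ℝ]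
    _ = ∑' n : ℕ, (((n ! : ℝ)⁻¹) • (τ • A) ^ n) v :=
        (ContinuousLinearMap.apply ℝ E v).map_tsum hsum
    _ = ∑' n : ℕ, (((n ! : ℝ)⁻¹) * (τ * lam) ^ n) • v := by
        simp only [ContinuousLinearMap.smul_apply, hpow, smul_smul]
    _ = (∑' n : ℕ, ((n ! : ℝ)⁻¹) * (τ * lam) ^ n) • v := hsum2.tsum_smul_const v
    _ = Real.exp (τ * lam) • v := by
        congr 1
        rw [Real.exp_eq_exp_ℝ, NormedSpace.exp_eq_tsum_div]
        exact tsum_congr fun n => by rw [div_eq_inv_mul]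

lemma integral_exp_neg_mul_Ioi {b : ℝ} (hb : 0 < b) (t : ℝ) :
    ∫ s in Ioi t, Real.exp (-b * s) = Real.exp (-b * t) / b := by
  have hderiv : ∀ x ∈ Ioi t, HasDerivAt (fun x => -Real.exp (-b * x) / b)
      (Real.exp (-b * x)) x := by
    intro x _
    have h1 : HasDerivAt (fun x : ℝ => -b * x) (-b) x := by
      simpa using (hasDerivAt_id x).const_mul (-b)
    have h2 := (h1.exp).neg.div_const b
    refine h2.congr_deriv ?_
    rw [div_eq_iff hb.ne']; ring
  have htend : Tendsto (fun x => -Real.exp (-b * x) / b) atTop (𝓝 0) := by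
    have : Tendsto (fun x : ℝ => Real.exp (-b * x)) atTop (𝓝 0) := by
      have := Real.tendsto_exp_atBot.comp
        (tendsto_id.const_mul_atTop_of_neg (neg_neg_iff_pos.2 hb))
      exact this
    simpa using (this.neg.div_const b)
  have hcont : ContinuousWithinAt (fun x => -Real.exp (-b * x) / b) (Ici t) t := by
    exact (((Real.continuous_exp.comp (continuous_const.mul continuous_id)).neg.div_const
      b).continuousAt).continuousWithinAt
  have := MeasureTheory.integral_Ioi_of_hasDerivAt_of_tendsto hcont hderiv
    (exp_neg_integrableOn_Ioi t hb) htend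
  rw [this]
  ring

end

set_option maxHeartbeats 1000000 in
/-- Deterministic core of the convergence of `e^{−λt} Y(t)`: with
`D(t) = ∫₀ᵗ e^{(t−s)A} (A(s) − A) Y(s) ds`, the integral
`I = ∫₀^∞ e^{−λs} Π_v (A(s) − A) Y(s) ds` converges absolutely and
`‖e^{−λt} D(t) − I‖ ≤ C' e^{−ρt}` for some `ρ > 0`, `C'` and all `t ≥ 0`. -/
theorem stmt6 {d : ℕ} (lam Δ C₂ C₃ μ K α : ℝ)
    (hlam : 0 < lam) (hΔ : 0 < Δ) (hC₂ : 0 < C₂) (hC₃ : 0 ≤ C₃) (hμ : 0 < μ)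
    (hK : 0 ≤ K) (hα : 0 < α) (hαμ : α < μ)
    (v : EuclideanSpace ℝ (Fin d)) (hv : ‖v‖ = 1)
    (A : EuclideanSpace ℝ (Fin d) →L[ℝ] EuclideanSpace ℝ (Fin d))
    (hAv : A v = lam • v)
    (L : Submodule ℝ (EuclideanSpace ℝ (Fin d)))
    (hAL : ∀ u ∈ L, A u ∈ L)
    (hcompl : IsCompl (Submodule.span ℝ {v}) L)
    (hLdecay : ∀ u ∈ L, ∀ t ≥ (0:ℝ),
      ‖NormedSpace.exp (t • A) u‖ ≤ C₂ * Real.exp ((lam - Δ) * t) * ‖u‖)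
    (Pv PL : EuclideanSpace ℝ (Fin d) →L[ℝ] EuclideanSpace ℝ (Fin d))
    (hPv : ∀ z, Pv z ∈ Submodule.span ℝ {v}) (hPL : ∀ z, PL z ∈ L)
    (hsum : ∀ z, Pv z + PL z = z)
    (A' : ℝ → (EuclideanSpace ℝ (Fin d) →L[ℝ] EuclideanSpace ℝ (Fin d)))
    (hA'c : ContinuousOn A' (Ici 0))
    (hA'decay : ∀ s ≥ (0:ℝ), ‖A' s - A‖ ≤ C₃ * Real.exp (-μ * s))
    (Y : ℝ → EuclideanSpace ℝ (Fin d)) (hYc : Continuous Y)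
    (hYgrowth : ∀ s ≥ (0:ℝ), ‖Y s‖ ≤ K * Real.exp ((lam + α) * s)) :
    IntegrableOn
      (fun s => Real.exp (-lam * s) • Pv ((A' s - A) (Y s))) (Ioi 0) ∧
    ∃ ρ > (0:ℝ), ∃ C' : ℝ, ∀ t ≥ (0:ℝ),
      ‖Real.exp (-lam * t) •
          (∫ s in (0:ℝ)..t, (NormedSpace.exp ((t - s) • A)) ((A' s - A) (Y s))) -
        ∫ s in Ioi (0:ℝ), Real.exp (-lam * s) • Pv ((A' s - A) (Y s))‖
        ≤ C' * Real.exp (-ρ * t) := by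
  set w : ℝ → EuclideanSpace ℝ (Fin d) := fun s => (A' s - A) (Y s) with hw
  -- continuity of w on [0, ∞)
  have hwc : ContinuousOn w (Ici 0) :=
    (hA'c.sub continuousOn_const).clm_apply hYc.continuousOn
  -- growth bound on w
  have hwb : ∀ s ≥ (0:ℝ), ‖w s‖ ≤ C₃ * K * Real.exp ((lam + α - μ) * s) := by
    intro s hs
    calc ‖w s‖ ≤ ‖A' s - A‖ * ‖Y s‖ := (A' s - A).le_opNorm _
      _ ≤ (C₃ * Real.exp (-μ * s)) * (K * Real.exp ((lam + α) * s)) :=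
          mul_le_mul (hA'decay s hs) (hYgrowth s hs) (norm_nonneg _)
            (by positivity)
      _ = C₃ * K * (Real.exp (-μ * s) * Real.exp ((lam + α) * s)) := by ring
      _ = C₃ * K * Real.exp ((lam + α - μ) * s) := by
          rw [← Real.exp_add]; ring_nf
  set M₁ : ℝ := ‖Pv‖ * (C₃ * K) with hM₁
  have hM₁0 : 0 ≤ M₁ := by positivity
  set f₁ : ℝ → EuclideanSpace ℝ (Fin d) := fun s => Real.exp (-lam * s) • Pv (w s) with hf₁
  have hf₁c : ContinuousOn f₁ (Ici 0) :=
    ((Real.continuous_exp.comp (continuous_const.mul continuous_id)).continuousOn).smul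
      (Pv.continuous.comp_continuousOn hwc)
  have hf₁b : ∀ s ≥ (0:ℝ), ‖f₁ s‖ ≤ M₁ * Real.exp (-(μ - α) * s) := by
    intro s hs
    have h1 : ‖Pv (w s)‖ ≤ ‖Pv‖ * (C₃ * K * Real.exp ((lam + α - μ) * s)) :=
      le_trans (Pv.le_opNorm _) (mul_le_mul_of_nonneg_left (hwb s hs) (norm_nonneg _))
    calc ‖f₁ s‖ = Real.exp (-lam * s) * ‖Pv (w s)‖ := by
          rw [hf₁, norm_smul, Real.norm_eq_abs, abs_of_pos (Real.exp_pos _)]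
      _ ≤ Real.exp (-lam * s) * (‖Pv‖ * (C₃ * K * Real.exp ((lam + α - μ) * s))) :=
          mul_le_mul_of_nonneg_left h1 (Real.exp_pos _).le
      _ = M₁ * (Real.exp (-lam * s) * Real.exp ((lam + α - μ) * s)) := by rw [hM₁]; ring
      _ = M₁ * Real.exp (-(μ - α) * s) := by rw [← Real.exp_add]; ring_nf
  have hint : IntegrableOn f₁ (Ioi 0) := by
    have hmaj : IntegrableOn (fun s => M₁ * Real.exp (-(μ - α) * s)) (Ioi 0) :=
      (exp_neg_integrableOn_Ioi 0 (by linarith)).const_mul M₁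
    refine Integrable.mono' hmaj
      ((hf₁c.mono Ioi_subset_Ici_self).aestronglyMeasurable measurableSet_Ioi) ?_
    filter_upwards [ae_restrict_mem measurableSet_Ioi] with s hs
    exact hf₁b s (le_of_lt hs)
  refine ⟨hint, ?_⟩
  set m : ℝ := min Δ (μ - α) with hm
  have hmΔ : m ≤ Δ := min_le_left _ _
  have hmμα : m ≤ μ - α := min_le_right _ _
  have hm0 : 0 < m := lt_min hΔ (by linarith)
  set ρ : ℝ := m / 2 with hρ
  have hρ0 : 0 < ρ := by positivity
  have hρμα : ρ ≤ μ - α := by rw [hρ]; linarith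
  set M₂ : ℝ := C₂ * ‖PL‖ * (C₃ * K) with hM₂
  have hM₂0 : 0 ≤ M₂ := by positivity
  refine ⟨ρ, hρ0, M₁ / (μ - α) + M₂ / ρ, ?_⟩
  intro t ht
  have heig : ∀ τ : ℝ, ∀ z, NormedSpace.exp (τ • A) (Pv z) = Real.exp (τ * lam) • Pv z := by
    intro τ z
    obtain ⟨c, hc⟩ := Submodule.mem_span_singleton.1 (hPv z)
    rw [← hc, _root_.map_smul, exp_apply_eigen A v lam hAv τ, smul_comm]
  have hdecomp : ∀ s : ℝ, NormedSpace.exp ((t - s) • A) (w s)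
      = Real.exp ((t - s) * lam) • Pv (w s)
        + NormedSpace.exp ((t - s) • A) (PL (w s)) := by
    intro s
    conv_lhs => rw [← hsum (w s)]
    rw [map_add, heig]
  have hg_c : ContinuousOn (fun s => Real.exp ((t - s) * lam) • Pv (w s)) (Ici 0) :=
    ((Real.continuous_exp.comp ((continuous_const.sub continuous_id).mul
      continuous_const)).continuousOn).smul (Pv.continuous.comp_continuousOn hwc)
  have hh_c : ContinuousOn (fun s => NormedSpace.exp ((t - s) • A) (PL (w s))) (Ici 0) :=
    (((show Continuous (NormedSpace.exp : (EuclideanSpace ℝ (Fin d) →L[ℝ] EuclideanSpace ℝ (Fin d)) → _) from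
      continuous_iff_continuousAt.2 fun x => (NormedSpace.exp_analytic (𝕂 := ℝ) x).continuousAt).comp ((continuous_const.sub continuous_id).smul
      continuous_const)).continuousOn).clm_apply (PL.continuous.comp_continuousOn hwc)
  have huIcc : uIcc (0:ℝ) t ⊆ Ici 0 := by
    rw [uIcc_of_le ht]; exact Icc_subset_Ici_self
  have hgI : IntervalIntegrable (fun s => Real.exp ((t - s) * lam) • Pv (w s)) volume 0 t :=
    (hg_c.mono huIcc).intervalIntegrable
  have hhI : IntervalIntegrable (fun s => NormedSpace.exp ((t - s) • A) (PL (w s)))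
      volume 0 t := (hh_c.mono huIcc).intervalIntegrable
  have hsplit : (∫ s in (0:ℝ)..t, NormedSpace.exp ((t - s) • A) (w s))
      = (∫ s in (0:ℝ)..t, Real.exp ((t - s) * lam) • Pv (w s))
        + ∫ s in (0:ℝ)..t, NormedSpace.exp ((t - s) • A) (PL (w s)) := by
    rw [← intervalIntegral.integral_add hgI hhI]
    exact intervalIntegral.integral_congr fun s _ => hdecomp s
  have hscale : Real.exp (-lam * t) •
      (∫ s in (0:ℝ)..t, Real.exp ((t - s) * lam) • Pv (w s))
      = ∫ s in (0:ℝ)..t, f₁ s := by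
    rw [← intervalIntegral.integral_smul]
    refine intervalIntegral.integral_congr fun s _ => ?_
    rw [smul_smul, ← Real.exp_add, hf₁]
    have : -lam * t + (t - s) * lam = -lam * s := by ring
    rw [this]
  have hIoi : (∫ s in Ioi (0:ℝ), f₁ s)
      = (∫ s in (0:ℝ)..t, f₁ s) + ∫ s in Ioi t, f₁ s := by
    rw [intervalIntegral.integral_of_le ht,
      ← MeasureTheory.setIntegral_union (Ioc_disjoint_Ioi le_rfl) measurableSet_Ioi
        (hint.mono_set Ioc_subset_Ioi_self) (hint.mono_set (Ioi_subset_Ioi ht)),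
      Ioc_union_Ioi_eq_Ioi ht]
  rw [hsplit, smul_add, hscale, hIoi]
  have hrw : (∫ s in (0:ℝ)..t, f₁ s)
      + Real.exp (-lam * t) •
        (∫ s in (0:ℝ)..t, NormedSpace.exp ((t - s) • A) (PL (w s)))
      - ((∫ s in (0:ℝ)..t, f₁ s) + ∫ s in Ioi t, f₁ s)
      = Real.exp (-lam * t) •
        (∫ s in (0:ℝ)..t, NormedSpace.exp ((t - s) • A) (PL (w s)))
        - ∫ s in Ioi t, f₁ s := by abel
  rw [hrw]
  have htail : ‖∫ s in Ioi t, f₁ s‖ ≤ M₁ / (μ - α) * Real.exp (-ρ * t) := by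
    have h1 : ‖∫ s in Ioi t, f₁ s‖ ≤ ∫ s in Ioi t, M₁ * Real.exp (-(μ - α) * s) := by
      refine MeasureTheory.norm_integral_le_of_norm_le
        ((exp_neg_integrableOn_Ioi t (by linarith)).const_mul M₁) ?_
      filter_upwards [ae_restrict_mem measurableSet_Ioi] with s hs
      exact hf₁b s (le_trans ht (le_of_lt hs))
    have h2 : (∫ s in Ioi t, M₁ * Real.exp (-(μ - α) * s))
        = M₁ * (Real.exp (-(μ - α) * t) / (μ - α)) := by
      rw [MeasureTheory.integral_const_mul,
        integral_exp_neg_mul_Ioi (by linarith : (0:ℝ) < μ - α)]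
    have h3 : Real.exp (-(μ - α) * t) ≤ Real.exp (-ρ * t) := by
      apply Real.exp_le_exp.2
      nlinarith [mul_nonneg (sub_nonneg.2 hρμα) ht]
    calc ‖∫ s in Ioi t, f₁ s‖ ≤ M₁ * (Real.exp (-(μ - α) * t) / (μ - α)) := by
          rw [← h2]; exact h1
      _ = M₁ / (μ - α) * Real.exp (-(μ - α) * t) := by ring
      _ ≤ M₁ / (μ - α) * Real.exp (-ρ * t) := by
          exact mul_le_mul_of_nonneg_left h3 (div_nonneg hM₁0 (by linarith))
  have hPLpt : ∀ s ∈ Set.uIoc (0:ℝ) t, ‖NormedSpace.exp ((t - s) • A) (PL (w s))‖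
      ≤ M₂ * Real.exp (lam * t - m * t) := by
    intro s hs
    rw [Set.uIoc_of_le ht] at hs
    obtain ⟨hs0, hst⟩ := hs
    have hs0' : (0:ℝ) ≤ s := hs0.le
    have h1 := hLdecay (PL (w s)) (hPL _) (t - s) (by linarith)
    have h2 : ‖PL (w s)‖ ≤ ‖PL‖ * (C₃ * K * Real.exp ((lam + α - μ) * s)) :=
      le_trans (PL.le_opNorm _) (mul_le_mul_of_nonneg_left (hwb s hs0') (norm_nonneg _))
    calc ‖NormedSpace.exp ((t - s) • A) (PL (w s))‖
        ≤ C₂ * Real.exp ((lam - Δ) * (t - s)) * ‖PL (w s)‖ := h1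
      _ ≤ C₂ * Real.exp ((lam - Δ) * (t - s))
          * (‖PL‖ * (C₃ * K * Real.exp ((lam + α - μ) * s))) :=
          mul_le_mul_of_nonneg_left h2 (by positivity)
      _ = M₂ * Real.exp ((lam - Δ) * (t - s) + (lam + α - μ) * s) := by
          rw [Real.exp_add, hM₂]; ring
      _ ≤ M₂ * Real.exp (lam * t - m * t) := by
          refine mul_le_mul_of_nonneg_left (Real.exp_le_exp.2 ?_) hM₂0
          nlinarith [mul_nonneg (sub_nonneg.2 hmΔ) (sub_nonneg.2 hst),
            mul_nonneg (sub_nonneg.2 hmμα) hs0']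
  have hPLint : ‖∫ s in (0:ℝ)..t, NormedSpace.exp ((t - s) • A) (PL (w s))‖
      ≤ M₂ * Real.exp (lam * t - m * t) * t := by
    have := intervalIntegral.norm_integral_le_of_norm_le_const hPLpt
    simpa [abs_of_nonneg ht] using this
  have hkey : t * Real.exp (-ρ * t) ≤ 1 / ρ := by
    have h1 : ρ * t ≤ Real.exp (ρ * t) := by
      have := Real.add_one_le_exp (ρ * t)
      linarith
    have h2 : Real.exp (ρ * t) * Real.exp (-ρ * t) = 1 := by
      rw [← Real.exp_add]; simp
    have h3 : t ≤ Real.exp (ρ * t) / ρ := by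
      rw [le_div_iff₀ hρ0]; nlinarith
    calc t * Real.exp (-ρ * t) ≤ (Real.exp (ρ * t) / ρ) * Real.exp (-ρ * t) :=
          mul_le_mul_of_nonneg_right h3 (Real.exp_pos _).le
      _ = 1 / ρ := by rw [div_mul_eq_mul_div, h2]
  have hPLfinal : ‖Real.exp (-lam * t) •
      (∫ s in (0:ℝ)..t, NormedSpace.exp ((t - s) • A) (PL (w s)))‖
      ≤ M₂ / ρ * Real.exp (-ρ * t) := by
    rw [norm_smul, Real.norm_eq_abs, abs_of_pos (Real.exp_pos _)]
    calc Real.exp (-lam * t)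
          * ‖∫ s in (0:ℝ)..t, NormedSpace.exp ((t - s) • A) (PL (w s))‖
        ≤ Real.exp (-lam * t) * (M₂ * Real.exp (lam * t - m * t) * t) :=
          mul_le_mul_of_nonneg_left hPLint (Real.exp_pos _).le
      _ = M₂ * (t * Real.exp (-ρ * t)) * Real.exp (-ρ * t) := by
          rw [show Real.exp (-lam * t) * (M₂ * Real.exp (lam * t - m * t) * t)
              = M₂ * t * (Real.exp (-lam * t) * Real.exp (lam * t - m * t)) by ring,
            ← Real.exp_add,
            show -lam * t + (lam * t - m * t) = -ρ * t + -ρ * t by rw [hρ]; ring,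
            Real.exp_add]
          ring
      _ ≤ M₂ * (1 / ρ) * Real.exp (-ρ * t) := by
          apply mul_le_mul_of_nonneg_right _ (Real.exp_pos _).le
          exact mul_le_mul_of_nonneg_left hkey hM₂0
      _ = M₂ / ρ * Real.exp (-ρ * t) := by ring
  calc ‖Real.exp (-lam * t) •
        (∫ s in (0:ℝ)..t, NormedSpace.exp ((t - s) • A) (PL (w s)))
        - ∫ s in Ioi t, f₁ s‖
      ≤ ‖Real.exp (-lam * t) •
        (∫ s in (0:ℝ)..t, NormedSpace.exp ((t - s) • A) (PL (w s)))‖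
        + ‖∫ s in Ioi t, f₁ s‖ := norm_sub_le _ _
    _ ≤ M₂ / ρ * Real.exp (-ρ * t) + M₁ / (μ - α) * Real.exp (-ρ * t) :=
        add_le_add hPLfinal htail
    _ = (M₁ / (μ - α) + M₂ / ρ) * Real.exp (-ρ * t) := by ring
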